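/- Let A be a symmetric d×d real matrix with −L·I ⪯ A ⪯ L·I, and let 0 ≤ t ≤ 1/(2(2L+1)) with L ≥ 1. Then the matrix T = (1−t)·I − 2t·A is invertible and satisfies (1 − 4tL)·I ⪯ T⁻² ⪯ (1 + 18tL)·I and (1 − 2tL)·I ⪯ T⁻¹ ⪯ (1 + 6tL)·I. -/

import Mathlib

open Matrix

private lemma conj_diag_psd {d : ℕ} (U : Matrix (Fin d) (Fin d) ℝ)
    (f : Fin d → ℝ) (hf : ∀ i, 0 ≤ f i) :
    (U * diagonal f * star U).PosSemidef := by
  rw [Matrix.star_eq_conjTranspose]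
  exact (Matrix.posSemidef_diagonal_iff.mpr hf).mul_mul_conjTranspose_same U

private lemma diag_fun_sub {d : ℕ} (f g : Fin d → ℝ) :
    (diagonal (fun i => f i - g i) : Matrix (Fin d) (Fin d) ℝ)
      = diagonal f - diagonal g :=
  (Matrix.diagonal_sub f g).symm

private lemma conj_diag_sub_psd {d : ℕ} (U : Matrix (Fin d) (Fin d) ℝ)
    (f g : Fin d → ℝ) (h : ∀ i, g i ≤ f i) :
    (U * diagonal f * star U - U * diagonal g * star U).PosSemidef := by
  have hdiag : U * diagonal f * star U - U * diagonal g * star U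
      = U * diagonal (fun i => f i - g i) * star U := by
    rw [diag_fun_sub, Matrix.mul_sub, Matrix.sub_mul]
  rw [hdiag]
  exact conj_diag_psd U _ fun i => sub_nonneg.mpr (h i)

private lemma smul_one_eq_conj {d : ℕ} (U : Matrix (Fin d) (Fin d) ℝ)
    (hU : U * star U = 1) (c : ℝ) :
    c • (1 : Matrix (Fin d) (Fin d) ℝ) = U * diagonal (fun _ => c) * star U := by
  rw [Matrix.smul_one_eq_diagonal] at *
  rw [show (diagonal (fun _ => c) : Matrix (Fin d) (Fin d) ℝ)
      = c • (1 : Matrix (Fin d) (Fin d) ℝ) from (Matrix.smul_one_eq_diagonal c).symm,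
    Matrix.mul_smul, Matrix.smul_mul, Matrix.mul_one, hU]

private lemma conj_mul_conj {d : ℕ} (U : Matrix (Fin d) (Fin d) ℝ)
    (hU : star U * U = 1) (f g : Fin d → ℝ) :
    (U * diagonal f * star U) * (U * diagonal g * star U)
      = U * diagonal (fun i => f i * g i) * star U := by
  calc (U * diagonal f * star U) * (U * diagonal g * star U)
      = U * diagonal f * ((star U * U) * (diagonal g * star U)) := by
        simp only [Matrix.mul_assoc]
    _ = U * (diagonal f * diagonal g) * star U := by
        rw [hU, Matrix.one_mul]; simp only [Matrix.mul_assoc]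
    _ = U * diagonal (fun i => f i * g i) * star U := by
        rw [Matrix.diagonal_mul_diagonal]

set_option maxHeartbeats 1000000

/-- Bounds on the diffusion matrix for the backward algorithm: if `−L·I ⪯ A ⪯ L·I`, `L ≥ 1`,
`0 ≤ t ≤ 1/(2(2L+1))`, then `T = (1−t)I − 2tA` is invertible,
`(1 − 4tL)I ⪯ T⁻² ⪯ (1 + 18tL)I` and `(1 − 2tL)I ⪯ T⁻¹ ⪯ (1 + 6tL)I`. -/
theorem stmt4 {d : ℕ} (L t : ℝ) (hL : 1 ≤ L)
    (A : Matrix (Fin d) (Fin d) ℝ) (hA : A.IsHermitian)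
    (hlower : (A + L • (1 : Matrix (Fin d) (Fin d) ℝ)).PosSemidef)
    (hupper : (L • (1 : Matrix (Fin d) (Fin d) ℝ) - A).PosSemidef)
    (ht0 : 0 ≤ t) (ht : t ≤ 1 / (2 * (2 * L + 1))) :
    IsUnit ((1 - t) • (1 : Matrix (Fin d) (Fin d) ℝ) - (2 * t) • A) ∧
    ∀ T : Matrix (Fin d) (Fin d) ℝ,
      T = (1 - t) • (1 : Matrix (Fin d) (Fin d) ℝ) - (2 * t) • A →
      ((T⁻¹ * T⁻¹ - (1 - 4 * t * L) • (1 : Matrix (Fin d) (Fin d) ℝ)).PosSemidef ∧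
       ((1 + 18 * t * L) • (1 : Matrix (Fin d) (Fin d) ℝ) - T⁻¹ * T⁻¹).PosSemidef ∧
       (T⁻¹ - (1 - 2 * t * L) • (1 : Matrix (Fin d) (Fin d) ℝ)).PosSemidef ∧
       ((1 + 6 * t * L) • (1 : Matrix (Fin d) (Fin d) ℝ) - T⁻¹).PosSemidef) := by
  have hL0 : (0:ℝ) ≤ L := by linarith
  have htc : t * (2 * (2 * L + 1)) ≤ 1 := by
    have hpos : (0:ℝ) < 2 * (2 * L + 1) := by linarith
    calc t * (2 * (2 * L + 1)) ≤ (1 / (2 * (2 * L + 1))) * (2 * (2 * L + 1)) := by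
          exact mul_le_mul_of_nonneg_right ht (le_of_lt hpos)
      _ = 1 := by field_simp
  -- spectral data
  obtain ⟨U, lam, hU1, hU2, hdiagA, hAeq⟩ :
      ∃ (U : Matrix (Fin d) (Fin d) ℝ) (lam : Fin d → ℝ),
        U * star U = 1 ∧ star U * U = 1 ∧ star U * A * U = diagonal lam ∧
        A = U * diagonal lam * star U := by
    refine ⟨(hA.eigenvectorUnitary : Matrix (Fin d) (Fin d) ℝ), hA.eigenvalues,
      (Matrix.mem_unitaryGroup_iff).mp hA.eigenvectorUnitary.2,
      (Matrix.mem_unitaryGroup_iff').mp hA.eigenvectorUnitary.2, ?_, ?_⟩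
    · have := hA.conjStarAlgAut_star_eigenvectorUnitary
      rwa [Unitary.conjStarAlgAut_apply, Unitary.coe_star, star_star, RCLike.ofReal_real_eq_id, Function.id_comp] at this
    · have := hA.spectral_theorem
      rwa [Unitary.conjStarAlgAut_apply, RCLike.ofReal_real_eq_id, Function.id_comp] at this
  have hstarU_ct : (star U)ᴴ = U := by
    rw [Matrix.star_eq_conjTranspose, Matrix.conjTranspose_conjTranspose]
  -- eigenvalue bounds
  have hlow : ∀ i, -L ≤ lam i := by
    have hpsd : (star U * (A + L • (1 : Matrix (Fin d) (Fin d) ℝ)) * U).PosSemidef := by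
      have := hlower.mul_mul_conjTranspose_same (star U)
      rwa [hstarU_ct] at this
    have heq : star U * (A + L • (1 : Matrix (Fin d) (Fin d) ℝ)) * U
        = diagonal (fun i => lam i + L) := by
      rw [Matrix.mul_add, Matrix.add_mul, hdiagA, Matrix.mul_smul, Matrix.smul_mul,
        Matrix.mul_one, hU2, Matrix.smul_one_eq_diagonal,
        show (diagonal (fun i => lam i + L) : Matrix (Fin d) (Fin d) ℝ)
          = diagonal lam + diagonal (fun _ => L) from (Matrix.diagonal_add lam (fun _ => L)).symm]
    rw [heq] at hpsd
    intro i
    have := Matrix.posSemidef_diagonal_iff.mp hpsd i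
    linarith
  have hhigh : ∀ i, lam i ≤ L := by
    have hpsd : (star U * (L • (1 : Matrix (Fin d) (Fin d) ℝ) - A) * U).PosSemidef := by
      have := hupper.mul_mul_conjTranspose_same (star U)
      rwa [hstarU_ct] at this
    have heq : star U * (L • (1 : Matrix (Fin d) (Fin d) ℝ) - A) * U
        = diagonal (fun i => L - lam i) := by
      rw [Matrix.mul_sub, Matrix.sub_mul, hdiagA, Matrix.mul_smul, Matrix.smul_mul,
        Matrix.mul_one, hU2, Matrix.smul_one_eq_diagonal, diag_fun_sub (fun _ => L) lam]
    rw [heq] at hpsd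
    intro i
    have := Matrix.posSemidef_diagonal_iff.mp hpsd i
    linarith
  -- the matrix T as a conjugated diagonal
  set m : Fin d → ℝ := fun i => 1 - t - 2 * t * lam i with hmdef
  have hm_pos : ∀ i, (1:ℝ)/2 ≤ m i := by
    intro i
    have h2 := hhigh i
    show (1:ℝ)/2 ≤ 1 - t - 2 * t * lam i
    nlinarith [mul_nonneg ht0 (sub_nonneg.mpr h2)]
  have hm_ne : ∀ i, m i ≠ 0 := fun i => by have := hm_pos i; positivity
  have hTrep : (1 - t) • (1 : Matrix (Fin d) (Fin d) ℝ) - (2 * t) • A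
      = U * diagonal m * star U := by
    have hdm : (diagonal m : Matrix (Fin d) (Fin d) ℝ)
        = (1 - t) • (1 : Matrix (Fin d) (Fin d) ℝ) - (2 * t) • diagonal lam := by
      rw [Matrix.smul_one_eq_diagonal, ← Matrix.diagonal_smul, ← Matrix.diagonal_sub]
      congr 1
    rw [hdm, Matrix.mul_sub, Matrix.sub_mul, Matrix.mul_smul, Matrix.smul_mul,
      Matrix.mul_smul, Matrix.smul_mul, Matrix.mul_one, hU1, ← hAeq]
  set S : Matrix (Fin d) (Fin d) ℝ := U * diagonal (fun i => (m i)⁻¹) * star U with hSdef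
  have hTS : (U * diagonal m * star U) * S = 1 := by
    rw [hSdef, conj_mul_conj U hU2]
    have heq1 : (fun i => m i * (m i)⁻¹) = fun _ : Fin d => (1:ℝ) := by
      funext i; exact mul_inv_cancel₀ (hm_ne i)
    rw [heq1, Matrix.diagonal_one, Matrix.mul_one, hU1]
  have hST : S * (U * diagonal m * star U) = 1 := by
    rw [hSdef, conj_mul_conj U hU2]
    have heq1 : (fun i => (m i)⁻¹ * m i) = fun _ : Fin d => (1:ℝ) := by
      funext i; exact inv_mul_cancel₀ (hm_ne i)
    rw [heq1, Matrix.diagonal_one, Matrix.mul_one, hU1]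
  constructor
  · exact ⟨⟨(1 - t) • (1 : Matrix (Fin d) (Fin d) ℝ) - (2 * t) • A, S,
      by rw [hTrep]; exact hTS, by rw [hTrep]; exact hST⟩, rfl⟩
  intro T hT
  have hTinv : T⁻¹ = S := by
    apply Matrix.inv_eq_right_inv
    rw [hT, hTrep]; exact hTS
  have hTinv2 : T⁻¹ * T⁻¹ = U * diagonal (fun i => (m i)⁻¹ * (m i)⁻¹) * star U := by
    rw [hTinv, hSdef, conj_mul_conj U hU2]
  -- scalar bounds on the inverse
  have hinv_lb : ∀ i, 1 - 2 * t * L ≤ (m i)⁻¹ := by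
    intro i
    have h2 := hhigh i
    have h1 := hlow i
    have hmp : (0:ℝ) < m i := lt_of_lt_of_le (by norm_num) (hm_pos i)
    rw [inv_eq_one_div, le_div_iff₀ hmp]
    have h12 : (0:ℝ) ≤ 1 - 2*t*L := by nlinarith
    show (1 - 2 * t * L) * (1 - t - 2 * t * lam i) ≤ 1
    nlinarith [mul_nonneg (mul_nonneg ht0 h12) (by linarith : (0:ℝ) ≤ L + lam i),
      sq_nonneg (t*L), mul_nonneg ht0 h12]
  have hinv_ub : ∀ i, (m i)⁻¹ ≤ 1 + 6 * t * L := by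
    intro i
    have hmp : (0:ℝ) < m i := lt_of_lt_of_le (by norm_num) (hm_pos i)
    rw [inv_eq_one_div, div_le_iff₀ hmp]
    show 1 ≤ (1 + 6 * t * L) * (1 - t - 2 * t * lam i)
    nlinarith [mul_nonneg ht0 (sub_nonneg.mpr (hhigh i)),
      mul_nonneg (mul_nonneg ht0 ht0) (sub_nonneg.mpr (hhigh i)),
      mul_nonneg (mul_nonneg (mul_nonneg ht0 ht0) (sub_nonneg.mpr (hhigh i))) (le_trans zero_le_one hL),
      mul_nonneg ht0 (le_of_lt (lt_of_lt_of_le zero_lt_one hL))]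
  have hinv2_lb : ∀ i, 1 - 4 * t * L ≤ (m i)⁻¹ * (m i)⁻¹ := by
    intro i
    have h2 := hhigh i
    have h1 := hlow i
    have hmp : (0:ℝ) < m i := lt_of_lt_of_le (by norm_num) (hm_pos i)
    rw [← mul_inv, inv_eq_one_div, le_div_iff₀ (by positivity)]
    have h4 : (0:ℝ) ≤ 1 - 4*t*L := by nlinarith
    have hmle : m i ≤ 1+2*t*L := by
      show 1 - t - 2 * t * lam i ≤ 1+2*t*L
      nlinarith [mul_nonneg ht0 (by linarith : (0:ℝ) ≤ L + lam i)]
    have hsq : m i * m i ≤ (1+2*t*L)*(1+2*t*L) :=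
      mul_self_le_mul_self (le_of_lt hmp) hmle
    have hmul := mul_le_mul_of_nonneg_left hsq h4
    nlinarith [mul_nonneg (mul_nonneg (mul_nonneg ht0 hL0) (mul_nonneg ht0 hL0)) (mul_nonneg ht0 hL0),
      mul_nonneg (mul_nonneg ht0 hL0) (mul_nonneg ht0 hL0)]
  have hinv2_ub : ∀ i, (m i)⁻¹ * (m i)⁻¹ ≤ 1 + 18 * t * L := by
    intro i
    have hmp : (0:ℝ) < m i := lt_of_lt_of_le (by norm_num) (hm_pos i)
    rw [← mul_inv, inv_eq_one_div, div_le_iff₀ (by positivity)]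
    have hx : (0:ℝ) ≤ 1 - 2*(2*L+1)*t := by nlinarith
    have key : 1 ≤ (1 + 18*t*L) * ((1-t-2*t*L)*(1-t-2*t*L)) := by
      nlinarith [mul_nonneg ht0 (by linarith : (0:ℝ) ≤ L - 1), mul_nonneg ht0 hx,
        mul_nonneg (mul_nonneg ht0 hx) hL0, mul_nonneg (mul_nonneg ht0 hx) hx,
        mul_nonneg (mul_nonneg (mul_nonneg ht0 hx) hx) hL0]
    have hm0 : (0:ℝ) ≤ 1-t-2*t*L := by nlinarith
    have hle : 1-t-2*t*L ≤ m i := by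
      show 1-t-2*t*L ≤ 1 - t - 2 * t * lam i
      nlinarith [mul_nonneg ht0 (sub_nonneg.mpr (hhigh i))]
    have hsq : (1-t-2*t*L)*(1-t-2*t*L) ≤ m i * m i := mul_self_le_mul_self hm0 hle
    nlinarith [mul_le_mul_of_nonneg_left hsq (by nlinarith : (0:ℝ) ≤ 1 + 18*t*L)]
  clear_value S m
  refine ⟨?_, ?_, ?_, ?_⟩
  · rw [hTinv2, smul_one_eq_conj U hU1]
    exact conj_diag_sub_psd U _ _ hinv2_lb
  · rw [hTinv2, smul_one_eq_conj U hU1]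
    exact conj_diag_sub_psd U _ _ hinv2_ub
  · rw [hTinv, hSdef, smul_one_eq_conj U hU1]
    exact conj_diag_sub_psd U _ _ hinv_lb
  · rw [hTinv, hSdef, smul_one_eq_conj U hU1]
    exact conj_diag_sub_psd U _ _ hinv_ub
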